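/- Suppose there are m candidates linearly ordered and k winners are selected by Bloc voting (each voter approves their top k candidates, and the k candidates with the most approvals win) under single-peaked preferences. If candidate C_i with i ≤ k is a winner, then C_{i+1}, ..., C_k are all winners; symmetrically, if C_i with i ≥ m−k+1 is a winner, then C_{m-k+1}, ..., C_{i-1} are all winners. -/
import Mathlib


open Finset

/-- Each voter's preference is a strict total (linear) order on the candidates. -/
def StrictPrefs {m N : ℕ} (P : Fin N → Fin m → Fin m → Prop) : Prop :=
  ∀ v : Fin N, IsStrictTotalOrder (Fin m) (P v)

/-- Single-peakedness w.r.t. the left-right order on `Fin m`: for `i < j < k`,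
no voter ranks both `C_i` and `C_k` above `C_j`. -/
def SinglePeaked {m N : ℕ} (P : Fin N → Fin m → Fin m → Prop) : Prop :=
  ∀ (v : Fin N) (i j k : Fin m), i < j → j < k → ¬ (P v i j ∧ P v k j)

/-- Number of voters preferring `a` to `b`. -/
def prefCount {m N : ℕ} (P : Fin N → Fin m → Fin m → Prop)
    [∀ v a b, Decidable (P v a b)] (a b : Fin m) : ℕ :=
  (univ.filter fun v => P v a b).card

/-- `a` majority-defeats `b`: strictly more than `N/2` voters prefer `a` to `b`. -/
def Defeats {m N : ℕ} (P : Fin N → Fin m → Fin m → Prop)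
    [∀ v a b, Decidable (P v a b)] (a b : Fin m) : Prop :=
  2 * prefCount P a b > N

instance {m N : ℕ} (P : Fin N → Fin m → Fin m → Prop)
    [∀ v a b, Decidable (P v a b)] (a b : Fin m) : Decidable (Defeats P a b) :=
  inferInstanceAs (Decidable (2 * prefCount P a b > N))

/-- Voter `v` approves candidate `a` under Bloc voting with `k` winners:
`a` is among `v`'s top `k` candidates. -/
def Approves {m N : ℕ} (P : Fin N → Fin m → Fin m → Prop)
    [∀ v a b, Decidable (P v a b)] (k : ℕ) (v : Fin N) (a : Fin m) : Prop :=
  (univ.filter fun b => P v b a).card < k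

instance {m N : ℕ} (P : Fin N → Fin m → Fin m → Prop)
    [∀ v a b, Decidable (P v a b)] (k : ℕ) (v : Fin N) (a : Fin m) :
    Decidable (Approves P k v a) :=
  inferInstanceAs (Decidable ((univ.filter fun b => P v b a).card < k))

/-- Bloc score of candidate `a`: the number of voters who approve `a`. -/
def blocScore {m N : ℕ} (P : Fin N → Fin m → Fin m → Prop)
    [∀ v a b, Decidable (P v a b)] (k : ℕ) (a : Fin m) : ℕ :=
  (univ.filter fun v => Approves P k v a).card

/-- `W` is a winning set under Bloc voting with `k` winners (strict vote totals):
`W` has `k` members and each member has strictly more approvals than each non-member. -/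
def IsWinningSet {m N : ℕ} (P : Fin N → Fin m → Fin m → Prop)
    [∀ v a b, Decidable (P v a b)] (k : ℕ) (W : Finset (Fin m)) : Prop :=
  W.card = k ∧ ∀ w ∈ W, ∀ c ∉ W, blocScore P k w > blocScore P k c

section Aux

variable {m N : ℕ} (P : Fin N → Fin m → Fin m → Prop) [∀ v a b, Decidable (P v a b)]

/-- The rank of candidate `a` for voter `v`: number of candidates preferred to `a`. -/
def rankOf (v : Fin N) (a : Fin m) : ℕ := (univ.filter fun x => P v x a).card

lemma rank_lt_rank (hP : StrictPrefs P) (v : Fin N) {a b : Fin m} (h : P v a b) :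
    rankOf P v a < rankOf P v b := by
  haveI := hP v
  have hsub : insert a (univ.filter fun x => P v x a) ⊆ univ.filter fun x => P v x b := by
    intro x hx
    rcases Finset.mem_insert.1 hx with rfl | hx
    · simp [h]
    · simp only [Finset.mem_filter, Finset.mem_univ, true_and] at hx ⊢
      exact trans_of (P v) hx h
  have hna : a ∉ (univ.filter fun x => P v x a) := by
    simp [irrefl_of (P v) a]
  have hle := Finset.card_le_card hsub
  rw [Finset.card_insert_of_notMem hna] at hle
  unfold rankOf
  omega

lemma rank_lt_m (hP : StrictPrefs P) (v : Fin N) (a : Fin m) : rankOf P v a < m := by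
  haveI := hP v
  have hsub : (univ.filter fun x => P v x a) ⊆ univ.erase a := by
    intro x hx
    simp only [Finset.mem_filter, Finset.mem_univ, true_and] at hx
    refine Finset.mem_erase.2 ⟨?_, Finset.mem_univ x⟩
    intro hxa
    rw [hxa] at hx
    exact irrefl_of (P v) a hx
  have := Finset.card_le_card hsub
  rw [Finset.card_erase_of_mem (Finset.mem_univ a), Finset.card_univ, Fintype.card_fin] at this
  have hm : 0 < m := a.pos
  unfold rankOf
  omega

lemma card_filter_val_lt {m c : ℕ} (h : c ≤ m) :
    (univ.filter fun r : Fin m => (r : ℕ) < c).card = c := by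
  have heq : (univ.filter fun r : Fin m => (r : ℕ) < c) =
      (univ : Finset (Fin c)).map ⟨Fin.castLE h, Fin.castLE_injective h⟩ := by
    ext r
    simp only [Finset.mem_filter, Finset.mem_univ, true_and, Finset.mem_map,
      Function.Embedding.coeFn_mk]
    constructor
    · intro hr; exact ⟨⟨r, hr⟩, rfl⟩
    · rintro ⟨s, rfl⟩; exact s.isLt
  rw [heq, Finset.card_map, Finset.card_univ, Fintype.card_fin]

/-- The number of candidates a voter approves equals `min k m`-ish: the card of the
top set equals the card of ranks below `k`. -/
lemma card_approves (hP : StrictPrefs P) (k : ℕ) (v : Fin N) :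
    (univ.filter fun a : Fin m => Approves P k v a).card =
      (univ.filter fun r : Fin m => (r : ℕ) < k).card := by
  haveI := hP v
  have hinj : Function.Injective (fun a : Fin m => (⟨rankOf P v a, rank_lt_m P hP v a⟩ : Fin m)) := by
    intro a b hab
    by_contra hne
    rcases trichotomous_of (P v) a b with h | h | h
    · exact absurd (congrArg Fin.val hab) (Nat.ne_of_lt (rank_lt_rank P hP v h))
    · exact hne h
    · exact absurd (congrArg Fin.val hab) (Nat.ne_of_gt (rank_lt_rank P hP v h))
  have hsurj : Function.Surjective
      (fun a : Fin m => (⟨rankOf P v a, rank_lt_m P hP v a⟩ : Fin m)) :=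
    Finite.surjective_of_injective hinj
  refine Finset.card_bij (fun a _ => (⟨rankOf P v a, rank_lt_m P hP v a⟩ : Fin m)) ?_ ?_ ?_
  · intro a ha
    simp only [Finset.mem_filter, Finset.mem_univ, true_and] at ha ⊢
    exact ha
  · intro a _ b _ hab
    exact hinj hab
  · intro r hr
    obtain ⟨a, ha⟩ := hsurj r
    refine ⟨a, ?_, ha⟩
    simp only [Finset.mem_filter, Finset.mem_univ, true_and] at hr ⊢
    rw [← ha] at hr
    exact hr

/-- Monotonicity to the right below position `k`. -/
lemma approves_mono_left (hP : StrictPrefs P) (hSP : SinglePeaked P) (k : ℕ) (v : Fin N)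
    {i j : Fin m} (hij : i < j) (hjk : (j : ℕ) < k) (hi : Approves P k v i) :
    Approves P k v j := by
  haveI := hP v
  by_contra hj
  have hjrank : k ≤ rankOf P v j := not_lt.1 hj
  -- every approved candidate is strictly left of j
  have hleft : (univ.filter fun a : Fin m => Approves P k v a) ⊆
      univ.filter fun a : Fin m => (a : ℕ) < (j : ℕ) := by
    intro a ha
    simp only [Finset.mem_filter, Finset.mem_univ, true_and] at ha ⊢
    by_contra hja
    push_neg at hja
    have hja' : j < a ∨ j = a := by
      rcases lt_or_eq_of_le (Fin.le_def.2 hja) with h | h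
      · exact Or.inl h
      · exact Or.inr h
    rcases hja' with hja' | rfl
    · have := hSP v i j a hij hja'
      rcases trichotomous_of (P v) i j with h | rfl | h
      · rcases trichotomous_of (P v) a j with h2 | h2 | h2
        · exact this ⟨h, h2⟩
        · exact absurd h2.symm (Fin.ne_of_lt hja')
        · have := rank_lt_rank P hP v h2
          change rankOf P v j < rankOf P v a at this
          change rankOf P v a < k at ha
          omega
      · exact absurd rfl (Fin.ne_of_lt hij)
      · have := rank_lt_rank P hP v h
        change rankOf P v j < rankOf P v i at this
        change rankOf P v i < k at hi
        omega
    · exact hj ha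
  have h1 : (univ.filter fun a : Fin m => Approves P k v a).card ≤ (j : ℕ) := by
    calc (univ.filter fun a : Fin m => Approves P k v a).card
        ≤ (univ.filter fun a : Fin m => (a : ℕ) < (j : ℕ)).card := Finset.card_le_card hleft
      _ = (j : ℕ) := card_filter_val_lt (le_of_lt j.isLt)
  have h2 : (j : ℕ) + 1 ≤ (univ.filter fun a : Fin m => Approves P k v a).card := by
    rw [card_approves P hP k v]
    calc (j : ℕ) + 1 = (univ.filter fun r : Fin m => (r : ℕ) < (j : ℕ) + 1).card :=
          (card_filter_val_lt j.isLt).symm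
      _ ≤ (univ.filter fun r : Fin m => (r : ℕ) < k).card := by
          apply Finset.card_le_card
          intro r hr
          simp only [Finset.mem_filter, Finset.mem_univ, true_and] at hr ⊢
          omega
  omega

/-- Monotonicity to the left above position `m - k`. -/
lemma approves_mono_right (hP : StrictPrefs P) (hSP : SinglePeaked P) (k : ℕ) (v : Fin N)
    {i j : Fin m} (hji : j < i) (hjk : m - k ≤ (j : ℕ)) (hi : Approves P k v i) :
    Approves P k v j := by
  haveI := hP v
  by_contra hj
  have hjrank : k ≤ rankOf P v j := not_lt.1 hj
  -- every approved candidate is strictly right of j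
  have hright : (univ.filter fun a : Fin m => Approves P k v a) ⊆
      univ.filter fun a : Fin m => ¬ ((a : ℕ) < (j : ℕ) + 1) := by
    intro a ha
    simp only [Finset.mem_filter, Finset.mem_univ, true_and] at ha ⊢
    push_neg
    by_contra hja
    push_neg at hja
    have hja' : a < j ∨ a = j := by
      rcases lt_or_eq_of_le (Nat.lt_succ_iff.1 hja) with h | h
      · exact Or.inl (Fin.lt_def.2 h)
      · exact Or.inr (Fin.ext h)
    rcases hja' with hja' | rfl
    · have := hSP v a j i hja' hji
      rcases trichotomous_of (P v) a j with h | h | h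
      · rcases trichotomous_of (P v) i j with h2 | h2 | h2
        · exact this ⟨h, h2⟩
        · exact absurd h2 (Fin.ne_of_gt hji)
        · have := rank_lt_rank P hP v h2
          change rankOf P v j < rankOf P v i at this
          change rankOf P v i < k at hi
          omega
      · exact absurd h (Fin.ne_of_lt hja')
      · have := rank_lt_rank P hP v h
        change rankOf P v j < rankOf P v a at this
        change rankOf P v a < k at ha
        omega
    · exact hj ha
  have hcardcompl : (univ.filter fun a : Fin m => ¬ ((a : ℕ) < (j : ℕ) + 1)).card
      = m - ((j : ℕ) + 1) := by
    have := Finset.card_filter_add_card_filter_not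
      (s := (univ : Finset (Fin m))) (p := fun a : Fin m => (a : ℕ) < (j : ℕ) + 1)
    rw [card_filter_val_lt j.isLt, Finset.card_univ, Fintype.card_fin] at this
    omega
  have h1 : (univ.filter fun a : Fin m => Approves P k v a).card ≤ m - ((j : ℕ) + 1) := by
    calc (univ.filter fun a : Fin m => Approves P k v a).card
        ≤ _ := Finset.card_le_card hright
      _ = m - ((j : ℕ) + 1) := hcardcompl
  have hmjk : m - (j : ℕ) ≤ k := by omega
  have h2 : m - (j : ℕ) ≤ (univ.filter fun a : Fin m => Approves P k v a).card := by
    rw [card_approves P hP k v]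
    calc m - (j : ℕ) = (univ.filter fun r : Fin m => (r : ℕ) < m - (j : ℕ)).card :=
          (card_filter_val_lt (Nat.sub_le m _)).symm
      _ ≤ (univ.filter fun r : Fin m => (r : ℕ) < k).card := by
          apply Finset.card_le_card
          intro r hr
          simp only [Finset.mem_filter, Finset.mem_univ, true_and] at hr ⊢
          omega
  have hjm : (j : ℕ) < m := j.isLt
  omega

end Aux

/-- If `C_i` with `i ≤ k` (one-indexed) wins Bloc voting, so do
`C_{i+1}, ..., C_k`; symmetrically for `i ≥ m-k+1` on the right. (Zero-indexed:
`(i : ℕ) < k` resp. `m - k ≤ (i : ℕ)`.) -/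
theorem bloc_winners_near_extremes {m N : ℕ}
    (P : Fin N → Fin m → Fin m → Prop) [∀ v a b, Decidable (P v a b)]
    (hP : StrictPrefs P) (hSP : SinglePeaked P)
    (k : ℕ) (W : Finset (Fin m)) (hW : IsWinningSet P k W) :
    (∀ i ∈ W, (i : ℕ) < k → ∀ j : Fin m, i < j → (j : ℕ) < k → j ∈ W) ∧
    (∀ i ∈ W, m - k ≤ (i : ℕ) → ∀ j : Fin m, j < i → m - k ≤ (j : ℕ) → j ∈ W) := by
  obtain ⟨hcard, hbeat⟩ := hW
  constructor
  · intro i hi _ j hij hjk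
    by_contra hjW
    have hgt := hbeat i hi j hjW
    have hle : blocScore P k i ≤ blocScore P k j := by
      apply Finset.card_le_card
      intro v hv
      simp only [Finset.mem_filter, Finset.mem_univ, true_and] at hv ⊢
      exact approves_mono_left P hP hSP k v hij hjk hv
    omega
  · intro i hi _ j hji hjk
    by_contra hjW
    have hgt := hbeat i hi j hjW
    have hle : blocScore P k i ≤ blocScore P k j := by
      apply Finset.card_le_card
      intro v hv
      simp only [Finset.mem_filter, Finset.mem_univ, true_and] at hv ⊢
      exact approves_mono_right P hP hSP k v hji hjk hv
    omega
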